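/- A slice regular function whose twistor lift lies on the quadratic cone X₁² = X₂X₃: define f : ℍ∖ℝ → ℍ by f(α + Iβ) = (1/2)·(1 + I·i)·((α − iβ) − (α − iβ)⁻¹·j) for α, β ∈ ℝ with β > 0 and I ∈ 𝕊, where α − iβ is a quaternion in the real span of {1, i}. Then f is a slice regular function, and for every u in the real span of {1, i}, with I = (1 + u·j)⁻¹·i·(1 + u·j) and v = α + iβ (β > 0), one has the identity (1 + u·j)·f(α + Iβ) = u·v⁻¹ + (u·v)·j; in particular the lifted point with homogeneous coordinates (X₀, X₁, X₂, X₃) = (1, u, u·v⁻¹, u·v) satisfies X₁² = X₂·X₃. -/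

import Mathlib

set_option maxHeartbeats 1000000
set_option synthInstance.maxHeartbeats 200000

open scoped Quaternion QuaternionAlgebra

/-- The quaternion imaginary unit `i`. -/
noncomputable def qi : Quaternion ℝ := ⟨0, 1, 0, 0⟩

/-- The quaternion imaginary unit `j`. -/
noncomputable def qj : Quaternion ℝ := ⟨0, 0, 1, 0⟩

@[simp] lemma qi_re : qi.re = 0 := rfl
@[simp] lemma qi_imI : qi.imI = 1 := rfl
@[simp] lemma qi_imJ : qi.imJ = 0 := rfl
@[simp] lemma qi_imK : qi.imK = 0 := rfl
@[simp] lemma qj_re : qj.re = 0 := rfl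
@[simp] lemma qj_imI : qj.imI = 0 := rfl
@[simp] lemma qj_imJ : qj.imJ = 1 := rfl
@[simp] lemma qj_imK : qj.imK = 0 := rfl

/-- Embedding of `ℂ` into the real span of `{1, i}` in the quaternions. -/
noncomputable def cq (w : ℂ) : Quaternion ℝ := ⟨w.re, w.im, 0, 0⟩

@[simp] lemma cq_re (w:ℂ) : (cq w).re = w.re := rfl
@[simp] lemma cq_imI (w:ℂ) : (cq w).imI = w.im := rfl
@[simp] lemma cq_imJ (w:ℂ) : (cq w).imJ = 0 := rfl
@[simp] lemma cq_imK (w:ℂ) : (cq w).imK = 0 := rfl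

lemma cq_add (w v : ℂ) : cq (w+v) = cq w + cq v := by apply Quaternion.ext <;> simp
lemma cq_smul (r : ℝ) (w : ℂ) : cq (r • w) = r • cq w := by apply Quaternion.ext <;> simp
lemma cq_mul (w v : ℂ) : cq (w*v) = cq w * cq v := by
  apply Quaternion.ext <;>
    simp [Quaternion.re_mul, Quaternion.imI_mul, Quaternion.imJ_mul, Quaternion.imK_mul,
      Complex.mul_re, Complex.mul_im]
@[simp] lemma cq_one : cq 1 = 1 := by apply Quaternion.ext <;> simp <;> rfl
@[simp] lemma cq_zero : cq 0 = 0 := by apply Quaternion.ext <;> simp <;> rfl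

lemma cq_inv (w : ℂ) : cq w⁻¹ = (cq w)⁻¹ := by
  rcases eq_or_ne w 0 with rfl | h
  · simp
  · refine (inv_eq_of_mul_eq_one_right ?_).symm
    rw [← cq_mul, mul_inv_cancel₀ h, cq_one]

@[simp] lemma cq_I : cq Complex.I = qi := by apply Quaternion.ext <;> simp [qi]

lemma coe_add_qi_mul (z : ℂ) :
    ((z.re : ℝ) : Quaternion ℝ) + qi * ((z.im:ℝ) : Quaternion ℝ) = cq z := by
  apply Quaternion.ext <;>
    simp [Quaternion.re_mul, Quaternion.imI_mul, Quaternion.imJ_mul, Quaternion.imK_mul]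

lemma coe_sub_qi_mul (z : ℂ) : ((z.re : ℝ) : Quaternion ℝ) - qi * ((z.im:ℝ) : Quaternion ℝ)
    = cq ((starRingEnd ℂ) z) := by
  apply Quaternion.ext <;>
    simp [Quaternion.re_mul, Quaternion.imI_mul, Quaternion.imJ_mul, Quaternion.imK_mul]

/-- `cq` as a continuous `ℝ`-linear map. -/
noncomputable def cqL : ℂ →L[ℝ] Quaternion ℝ :=
  LinearMap.toContinuousLinearMap
    { toFun := cq, map_add' := cq_add, map_smul' := by intro r w; simpa using cq_smul r w }

@[simp] lemma cqL_apply (w : ℂ) : cqL w = cq w := rfl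

/-- The first stem component (as used on the upper half plane). -/
noncomputable def As (z : ℂ) : Quaternion ℝ :=
  (2:ℝ)⁻¹ • (cq ((starRingEnd ℂ) z) - cq (((starRingEnd ℂ) z)⁻¹) * qj)

lemma hasFDerivAt_As (z : ℂ) (hz : z ≠ 0) :
    ∃ (D : ℂ →L[ℝ] Quaternion ℝ) (e : ℂ), HasFDerivAt As D z ∧
      ∀ t : ℂ, D t = (2:ℝ)⁻¹ • (cq ((starRingEnd ℂ) t)
        - cq ((starRingEnd ℂ) t * e) * qj) := by
  have hc : HasFDerivAt (fun y : ℂ => (starRingEnd ℂ) y)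
      (Complex.conjCLE : ℂ →L[ℝ] ℂ) z := Complex.conjCLE.hasFDerivAt
  have h1 : HasFDerivAt (fun y : ℂ => cq ((starRingEnd ℂ) y))
      (cqL.comp (Complex.conjCLE : ℂ →L[ℝ] ℂ)) z := cqL.hasFDerivAt.comp z hc
  have hinv : HasFDerivAt (fun y : ℂ => y⁻¹)
      (((1 : ℂ →L[ℂ] ℂ).smulRight (-(z ^ 2)⁻¹)).restrictScalars ℝ) z :=
    ((hasDerivAt_inv hz).hasFDerivAt).restrictScalars ℝ
  have hci : HasFDerivAt (fun y : ℂ => (starRingEnd ℂ) (y⁻¹))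
      ((Complex.conjCLE : ℂ →L[ℝ] ℂ).comp
        (((1 : ℂ →L[ℂ] ℂ).smulRight (-(z ^ 2)⁻¹)).restrictScalars ℝ)) z :=
    (Complex.conjCLE.hasFDerivAt).comp z hinv
  have hci' : HasFDerivAt (fun y : ℂ => cq (((starRingEnd ℂ) y)⁻¹))
      (cqL.comp ((Complex.conjCLE : ℂ →L[ℝ] ℂ).comp
        (((1 : ℂ →L[ℂ] ℂ).smulRight (-(z ^ 2)⁻¹)).restrictScalars ℝ))) z := by
    have := cqL.hasFDerivAt.comp z hci
    refine this.congr_of_eventuallyEq (Filter.Eventually.of_forall fun y => ?_)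
    simp [Function.comp, map_inv₀]
  have h2 := (hci'.mul_const' qj)
  have h3 := (h1.sub h2).const_smul ((2:ℝ)⁻¹)
  refine ⟨_, (starRingEnd ℂ) (-(z^2)⁻¹), h3, fun t => ?_⟩
  simp [ContinuousLinearMap.smulRight_apply, Complex.conjCLE_apply, smul_eq_mul, mul_comm]

lemma slice_split (I S : Quaternion ℝ) :
    (2:ℝ)⁻¹ • ((1 + I * qi) * S) = (2:ℝ)⁻¹ • S + I * (qi * ((2:ℝ)⁻¹ • S)) := by
  rw [add_mul, one_mul, smul_add, mul_smul_comm, mul_smul_comm, mul_assoc]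

/-- **A slice regular function whose twistor lift lies on the quadratic cone
`X₁² = X₂X₃`**: the function `f(α + Iβ) = (1/2)(1 + I·i)((α - iβ) - (α - iβ)⁻¹·j)`
is slice regular, its lift satisfies `(1 + u·j)·f(α + Iβ) = u·v⁻¹ + (u·v)·j`
(`I = (1 + u·j)⁻¹·i·(1 + u·j)`, `v = α + iβ`), and the lifted point
`(1, u, u·v⁻¹, u·v)` satisfies `X₁² = X₂·X₃`. -/
theorem slice_regular_on_quadratic_cone
    (f : Quaternion ℝ → Quaternion ℝ)
    (hf : ∀ (α β : ℝ), 0 < β → ∀ I : Quaternion ℝ, I ^ 2 = -1 →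
      f ((α : Quaternion ℝ) + I * (β : Quaternion ℝ))
        = (2 : ℝ)⁻¹ • ((1 + I * qi) *
            (((α : Quaternion ℝ) - qi * (β : Quaternion ℝ))
              - ((α : Quaternion ℝ) - qi * (β : Quaternion ℝ))⁻¹ * qj))) :
    (∃ F₁ F₂ : ℂ → Quaternion ℝ,
      (∀ z : ℂ, z.im ≠ 0 →
        F₁ ((starRingEnd ℂ) z) = F₁ z ∧ F₂ ((starRingEnd ℂ) z) = - F₂ z) ∧
      (∀ z : ℂ, z.im ≠ 0 → ∀ I : Quaternion ℝ, I ^ 2 = -1 →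
        f ((z.re : Quaternion ℝ) + I * (z.im : Quaternion ℝ)) = F₁ z + I * F₂ z) ∧
      (∀ z : ℂ, z.im ≠ 0 → ∃ D₁ D₂ : ℂ →L[ℝ] Quaternion ℝ,
        HasFDerivAt F₁ D₁ z ∧ HasFDerivAt F₂ D₂ z ∧
        D₁ 1 = D₂ Complex.I ∧ D₁ Complex.I = - D₂ 1))
    ∧
    (∀ u ∈ Submodule.span ℝ ({1, qi} : Set (Quaternion ℝ)),
      ∀ z : ℂ, 0 < z.im →
        (1 + u * qj) *
            f ((z.re : Quaternion ℝ)
                + ((1 + u * qj)⁻¹ * qi * (1 + u * qj)) * (z.im : Quaternion ℝ))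
          = u * ((z.re : Quaternion ℝ) + qi * (z.im : Quaternion ℝ))⁻¹
            + (u * ((z.re : Quaternion ℝ) + qi * (z.im : Quaternion ℝ))) * qj ∧
        u ^ 2 = (u * ((z.re : Quaternion ℝ) + qi * (z.im : Quaternion ℝ))⁻¹)
            * (u * ((z.re : Quaternion ℝ) + qi * (z.im : Quaternion ℝ)))) := by
  constructor
  · -- Part 1: slice regularity
    refine ⟨fun z => if 0 < z.im then As z else As ((starRingEnd ℂ) z),
      fun z => if 0 < z.im then qi * As z else -(qi * As ((starRingEnd ℂ) z)), ?_, ?_, ?_⟩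
    · intro z him
      rcases him.lt_or_gt with h | h
      · have h1 : ¬ (0 < z.im) := not_lt.2 h.le
        have h2 : 0 < ((starRingEnd ℂ) z).im := by simpa using h
        constructor
        · simp only [if_pos h2, if_neg h1, Complex.conj_conj]
        · simp only [if_pos h2, if_neg h1, Complex.conj_conj, neg_neg]
      · have h2 : ¬ (0 < ((starRingEnd ℂ) z).im) := by
          simp only [Complex.conj_im, not_lt]; linarith
        constructor
        · simp only [if_pos h, if_neg h2, Complex.conj_conj]
        · simp only [if_pos h, if_neg h2, Complex.conj_conj]
    · intro z him I hI
      rcases him.lt_or_gt with h | h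
      · -- lower half plane
        have h1 : ¬ (0 < z.im) := not_lt.2 h.le
        have hI' : (-I) ^ 2 = -1 := by rw [neg_sq]; exact hI
        have hthis := hf z.re (-z.im) (by linarith) (-I) hI'
        push_cast at hthis
        rw [neg_mul_neg, mul_neg, sub_neg_eq_add, coe_add_qi_mul, slice_split] at hthis
        rw [hthis]
        simp only [if_neg h1, As, Complex.conj_conj, cq_inv]
        rw [neg_mul, mul_neg]
      · -- upper half plane
        rw [hf z.re z.im h I hI, coe_sub_qi_mul, slice_split]
        simp only [if_pos h, As, cq_inv]
    · intro z him
      have hz : z ≠ 0 := fun h0 => him (by simp [h0])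
      rcases him.lt_or_gt with h | h
      · -- lower half plane: F₁ = As ∘ conj near z
        have hcz : (starRingEnd ℂ) z ≠ 0 := by simpa using hz
        obtain ⟨D, e, hD, hDval⟩ := hasFDerivAt_As ((starRingEnd ℂ) z) hcz
        have hmem : {w : ℂ | w.im < 0} ∈ nhds z :=
          (isOpen_lt Complex.continuous_im continuous_const).mem_nhds h
        have hconj : HasFDerivAt (fun y : ℂ => As ((starRingEnd ℂ) y))
            (D.comp (Complex.conjCLE : ℂ →L[ℝ] ℂ)) z :=
          hD.comp z Complex.conjCLE.hasFDerivAt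
        have hF1 : HasFDerivAt (fun z : ℂ => if 0 < z.im then As z else As ((starRingEnd ℂ) z))
            (D.comp (Complex.conjCLE : ℂ →L[ℝ] ℂ)) z := by
          refine hconj.congr_of_eventuallyEq (Filter.eventuallyEq_of_mem hmem fun w hw => ?_)
          simp only [Set.mem_setOf_eq] at hw
          simp [not_lt.2 hw.le]
        have hF2 := ((hconj.const_mul qi).neg).congr_of_eventuallyEq
          (Filter.eventuallyEq_of_mem hmem fun w hw => by
            simp only [Set.mem_setOf_eq] at hw
            simp [not_lt.2 hw.le] :
            (fun z : ℂ => if 0 < z.im then qi * As z else -(qi * As ((starRingEnd ℂ) z)))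
              =ᶠ[nhds z] fun y : ℂ => -(qi * As ((starRingEnd ℂ) y)))
        refine ⟨_, _, hF1, hF2, ?_, ?_⟩
        · simp only [ContinuousLinearMap.coe_comp', Function.comp_apply,
            ContinuousLinearMap.neg_apply, ContinuousLinearMap.smul_apply,
            ContinuousLinearEquiv.coe_coe, Complex.conjCLE_apply, smul_eq_mul,
            map_one, Complex.conj_I, hDval]
          apply Quaternion.ext <;>
            simp [Quaternion.re_mul, Quaternion.imI_mul, Quaternion.imJ_mul,
              Quaternion.imK_mul, Complex.mul_re, Complex.mul_im] <;> ring
        · simp only [ContinuousLinearMap.coe_comp', Function.comp_apply,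
            ContinuousLinearMap.neg_apply, ContinuousLinearMap.smul_apply,
            ContinuousLinearEquiv.coe_coe, Complex.conjCLE_apply, smul_eq_mul,
            map_one, Complex.conj_I, hDval]
          apply Quaternion.ext <;>
            simp [Quaternion.re_mul, Quaternion.imI_mul, Quaternion.imJ_mul,
              Quaternion.imK_mul, Complex.mul_re, Complex.mul_im] <;> ring
      · -- upper half plane
        obtain ⟨D, e, hD, hDval⟩ := hasFDerivAt_As z hz
        have hmem : {w : ℂ | 0 < w.im} ∈ nhds z :=
          (isOpen_lt continuous_const Complex.continuous_im).mem_nhds h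
        have hF1 : HasFDerivAt (fun z : ℂ => if 0 < z.im then As z else As ((starRingEnd ℂ) z))
            D z := by
          refine hD.congr_of_eventuallyEq (Filter.eventuallyEq_of_mem hmem fun w hw => ?_)
          simp only [Set.mem_setOf_eq] at hw
          simp [hw]
        have hF2 := (hD.const_mul qi).congr_of_eventuallyEq
          (Filter.eventuallyEq_of_mem hmem fun w hw => by
            simp only [Set.mem_setOf_eq] at hw
            simp [hw] :
            (fun z : ℂ => if 0 < z.im then qi * As z else -(qi * As ((starRingEnd ℂ) z)))
              =ᶠ[nhds z] fun y : ℂ => qi * As y)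
        refine ⟨_, _, hF1, hF2, ?_, ?_⟩
        · simp only [ContinuousLinearMap.smul_apply, smul_eq_mul, hDval]
          apply Quaternion.ext <;>
            simp [Quaternion.re_mul, Quaternion.imI_mul, Quaternion.imJ_mul,
              Quaternion.imK_mul, Complex.mul_re, Complex.mul_im] <;> ring
        · simp only [ContinuousLinearMap.smul_apply, smul_eq_mul, hDval]
          apply Quaternion.ext <;>
            simp [Quaternion.re_mul, Quaternion.imI_mul, Quaternion.imJ_mul,
              Quaternion.imK_mul, Complex.mul_re, Complex.mul_im] <;> ring
  · -- Part 2
    intro u hu z hz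
    rw [Submodule.mem_span_pair] at hu
    obtain ⟨a, b, rfl⟩ := hu
    set w : ℂ := ⟨a, b⟩ with hwdef
    have hu : a • (1 : Quaternion ℝ) + b • qi = cq w := by
      apply Quaternion.ext <;> simp [hwdef]
    rw [hu]
    have hz0 : z ≠ 0 := fun h0 => by simp [h0] at hz
    set P : Quaternion ℝ := 1 + cq w * qj with hPdef
    have hPre : P.re = 1 := by
      simp [hPdef, Quaternion.re_mul]
    have hP0 : P ≠ 0 := by
      intro h0
      rw [h0] at hPre
      simp at hPre
    have hPP : P⁻¹ * P = 1 := inv_mul_cancel₀ hP0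
    have hPP' : P * P⁻¹ = 1 := mul_inv_cancel₀ hP0
    have hI : (P⁻¹ * qi * P) ^ 2 = -1 := by
      have h1 : (P⁻¹ * qi * P) * (P⁻¹ * qi * P) = P⁻¹ * qi * (P * P⁻¹) * qi * P := by
        noncomm_ring
      rw [sq, h1, hPP', mul_one]
      have h2 : P⁻¹ * qi * qi * P = P⁻¹ * (qi * qi) * P := by noncomm_ring
      have h3 : qi * qi = -1 := by
        apply Quaternion.ext <;>
          simp [Quaternion.re_mul, Quaternion.imI_mul, Quaternion.imJ_mul, Quaternion.imK_mul]
      rw [h2, h3]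
      rw [show P⁻¹ * -1 * P = -(P⁻¹ * P) by noncomm_ring, hPP]
    constructor
    · rw [hf z.re z.im hz (P⁻¹ * qi * P) hI, coe_sub_qi_mul, coe_add_qi_mul]
      have hPI : P * (P⁻¹ * qi * P) = qi * P := by
        rw [← mul_assoc, ← mul_assoc, hPP', one_mul]
      have hq : P + qi * P * qi = (2:ℝ) • (cq w * qj) := by
        apply Quaternion.ext <;>
          simp [hPdef, Quaternion.re_mul, Quaternion.imI_mul, Quaternion.imJ_mul,
            Quaternion.imK_mul] <;> ring
      rw [mul_smul_comm]
      have expand : P * ((1 + (P⁻¹ * qi * P) * qi) *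
          (cq ((starRingEnd ℂ) z) - (cq ((starRingEnd ℂ) z))⁻¹ * qj))
          = (P + qi * P * qi) * (cq ((starRingEnd ℂ) z) - (cq ((starRingEnd ℂ) z))⁻¹ * qj) := by
        rw [← mul_assoc, mul_add, mul_one, ← mul_assoc, hPI]
      rw [expand, hq, smul_mul_assoc, smul_smul]
      norm_num
      rw [← cq_inv, ← cq_inv]
      have hnz : Complex.normSq z ≠ 0 := by
        simpa [Complex.normSq_eq_zero] using hz0
      apply Quaternion.ext <;>
        simp [Quaternion.re_mul, Quaternion.imI_mul, Quaternion.imJ_mul, Quaternion.imK_mul,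
          Complex.inv_re, Complex.inv_im, Complex.normSq_conj] <;>
        (try field_simp) <;> ring
    · rw [coe_add_qi_mul, ← cq_inv, ← cq_mul, ← cq_mul, sq, ← cq_mul, ← cq_mul]
      congr 1
      field_simp
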